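/- Let X, Y be Hilbert spaces, A ∈ B(X,Y), and T ⊆ X, S ⊆ Y closed subspaces such that G = A_{T,S}^{(2)} exists. If T' is a closed subspace of X with δ̂(T,T') < 1/(1 + ‖A‖·‖G‖)², then the outer inverse A_{T',S}^{(2)} exists, it equals P_{T'}(I_X + G P_{S^⊥} A (P_{T'} − P_T))^{-1} G P_{S^⊥}, and ‖A_{T',S}^{(2)}‖ ≤ ‖G‖ / (1 − ‖G‖·‖A‖·δ̂(T,T')). -/

import Mathlib

noncomputable section

open ContinuousLinearMap

/-- δ(M,N) = sup{dist(x,N) : x ∈ M, ‖x‖ = 1}, with sSup ∅ = 0 covering M = {0}. -/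
def gapDelta {H : Type*} [NormedAddCommGroup H] (M N : Set H) : ℝ :=
  sSup ((fun x => Metric.infDist x N) '' {x | x ∈ M ∧ ‖x‖ = 1})

/-- The gap δ̂(M,N) = max{δ(M,N), δ(N,M)}. -/
def gapHat {H : Type*} [NormedAddCommGroup H] (M N : Set H) : ℝ :=
  max (gapDelta M N) (gapDelta N M)

/-- Orthogonal projection onto a closed subspace, as an operator H →L[ℂ] H. -/
def projCLM {H : Type*} [NormedAddCommGroup H] [InnerProductSpace ℂ H] [CompleteSpace H]
    (K : Submodule ℂ H) (hK : IsClosed (K : Set H)) : H →L[ℂ] H :=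
  haveI := hK.completeSpace_coe
  K.subtypeL.comp K.orthogonalProjectionOnto

/-- G is the outer inverse A_{T,S}^{(2)}: GAG = G, R(G) = T, N(G) = S. -/
def IsOuterInv {X Y : Type*} [NormedAddCommGroup X] [NormedSpace ℂ X]
    [NormedAddCommGroup Y] [NormedSpace ℂ Y]
    (A : X →L[ℂ] Y) (T : Submodule ℂ X) (S : Submodule ℂ Y) (G : Y →L[ℂ] X) : Prop :=
  G ∘L (A ∘L G) = G ∧ LinearMap.range (G : Y →ₗ[ℂ] X) = T ∧ LinearMap.ker (G : Y →ₗ[ℂ] X) = S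

/-- B is the Moore–Penrose inverse of A. -/
def IsMPInv {X Y : Type*} [NormedAddCommGroup X] [InnerProductSpace ℂ X] [CompleteSpace X]
    [NormedAddCommGroup Y] [InnerProductSpace ℂ Y] [CompleteSpace Y]
    (A : X →L[ℂ] Y) (B : Y →L[ℂ] X) : Prop :=
  A ∘L (B ∘L A) = A ∧ B ∘L (A ∘L B) = B ∧
  adjoint (A ∘L B) = A ∘L B ∧ adjoint (B ∘L A) = B ∘L A

section GapLemmas

variable {H : Type*} [NormedAddCommGroup H] [InnerProductSpace ℂ H] [CompleteSpace H]

lemma projCLM_mem (K : Submodule ℂ H) (hK : IsClosed (K : Set H)) (x : H) :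
    projCLM K hK x ∈ K := by
  haveI := hK.completeSpace_coe
  exact (K.orthogonalProjectionOnto x).2

lemma projCLM_of_mem (K : Submodule ℂ H) (hK : IsClosed (K : Set H)) {x : H} (hx : x ∈ K) :
    projCLM K hK x = x := by
  haveI := hK.completeSpace_coe
  simpa [projCLM] using congrArg Subtype.val (K.orthogonalProjectionOnto_mem_subspace_eq_self (⟨x, hx⟩ : K))

lemma sub_projCLM_mem_orthogonal (K : Submodule ℂ H) (hK : IsClosed (K : Set H)) (x : H) :
    x - projCLM K hK x ∈ Kᗮ := by
  haveI := hK.completeSpace_coe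
  exact K.sub_starProjection_mem_orthogonal x

lemma norm_projCLM_apply_le (K : Submodule ℂ H) (hK : IsClosed (K : Set H)) (x : H) :
    ‖projCLM K hK x‖ ≤ ‖x‖ := by
  haveI := hK.completeSpace_coe
  calc ‖projCLM K hK x‖ = ‖K.orthogonalProjectionOnto x‖ := rfl
    _ ≤ ‖(K.orthogonalProjectionOnto : H →L[ℂ] K)‖ * ‖x‖ := le_opNorm _ _
    _ ≤ 1 * ‖x‖ := by gcongr; exact K.orthogonalProjectionOnto_norm_le
    _ = ‖x‖ := one_mul _

lemma norm_projCLM_le (K : Submodule ℂ H) (hK : IsClosed (K : Set H)) :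
    ‖projCLM K hK‖ ≤ 1 :=
  opNorm_le_bound _ zero_le_one fun x => by rw [one_mul]; exact norm_projCLM_apply_le K hK x

lemma projCLM_selfAdjoint (K : Submodule ℂ H) (hK : IsClosed (K : Set H)) :
    IsSelfAdjoint (projCLM K hK) := by
  haveI := hK.completeSpace_coe
  exact isSelfAdjoint_starProjection K

lemma gapDelta_nonneg (M N : Set H) : 0 ≤ gapDelta M N :=
  Real.sSup_nonneg (by rintro r ⟨x, -, rfl⟩; exact Metric.infDist_nonneg)

lemma gapHat_nonneg (M N : Set H) : 0 ≤ gapHat M N :=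
  le_trans (gapDelta_nonneg M N) (le_max_left _ _)

/-- x - P_N x has norm ≤ infDist x N. -/
lemma norm_sub_projCLM_le_infDist (N : Submodule ℂ H) (hN : IsClosed (N : Set H)) (x : H) :
    ‖x - projCLM N hN x‖ ≤ Metric.infDist x (N : Set H) := by
  haveI := hN.completeSpace_coe
  rw [Metric.infDist_eq_iInf]
  haveI : Nonempty (N : Set H) := ⟨⟨0, N.zero_mem⟩⟩
  apply le_ciInf
  intro np
  obtain ⟨n, hn⟩ := np
  rw [dist_eq_norm]
  have horth : (inner ℂ (x - projCLM N hN x) (projCLM N hN x - n) : ℂ) = 0 := by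
    rw [inner_eq_zero_symm]
    exact (sub_projCLM_mem_orthogonal N hN x) _ (N.sub_mem (projCLM_mem N hN x) hn)
  have := norm_add_sq_eq_norm_sq_add_norm_sq_of_inner_eq_zero _ _ horth
  have hx : (x - projCLM N hN x) + (projCLM N hN x - n) = x - n := by abel
  rw [hx] at this
  nlinarith [norm_nonneg (x - n), norm_nonneg (x - projCLM N hN x), norm_nonneg (projCLM N hN x - n)]

/-- For m ∈ M, ‖m − P_N m‖ ≤ gapDelta M N * ‖m‖. -/
lemma norm_sub_projCLM_le_gapDelta (M N : Submodule ℂ H) (hN : IsClosed (N : Set H))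
    {m : H} (hm : m ∈ M) :
    ‖m - projCLM N hN m‖ ≤ gapDelta (M : Set H) (N : Set H) * ‖m‖ := by
  rcases eq_or_ne m 0 with rfl | hm0
  · simp [map_zero]
  · have hnorm : ‖m‖ ≠ 0 := norm_ne_zero_iff.mpr hm0
    set u : H := (‖m‖ : ℂ)⁻¹ • m with hu
    have hus : ‖u‖ = 1 := by
      rw [hu, norm_smul]; simp [hnorm]
    have humem : u ∈ M := M.smul_mem _ hm
    have hle : Metric.infDist u (N : Set H) ≤ gapDelta (M : Set H) (N : Set H) := by
      apply le_csSup
      · refine ⟨1, ?_⟩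
        rintro r ⟨x, ⟨-, hx1⟩, rfl⟩
        calc Metric.infDist x (N : Set H) ≤ dist x 0 := Metric.infDist_le_dist_of_mem (by simp [N.zero_mem])
          _ = 1 := by simp [dist_eq_norm, hx1]
      · exact ⟨u, ⟨humem, hus⟩, rfl⟩
    have h1 : ‖u - projCLM N hN u‖ ≤ gapDelta (M : Set H) (N : Set H) :=
      le_trans (norm_sub_projCLM_le_infDist N hN u) hle
    have h2 : m - projCLM N hN m = (‖m‖ : ℂ) • (u - projCLM N hN u) := by
      rw [hu, map_smul, smul_sub, smul_smul, smul_smul, mul_inv_cancel₀ (by exact_mod_cast hnorm), one_smul, one_smul]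
    rw [h2, norm_smul]
    simp only [Complex.norm_real, Real.norm_eq_abs, abs_norm]
    rw [mul_comm]
    exact mul_le_mul_of_nonneg_right h1 (norm_nonneg m)

lemma norm_orthProj_comp_projCLM_le (M N : Submodule ℂ H) (hM : IsClosed (M : Set H))
    (hN : IsClosed (N : Set H)) :
    ‖(1 - projCLM N hN) ∘L projCLM M hM‖ ≤ gapDelta (M : Set H) (N : Set H) := by
  apply opNorm_le_bound _ (gapDelta_nonneg _ _)
  intro x
  have h1 : ((1 - projCLM N hN) ∘L projCLM M hM) x
      = projCLM M hM x - projCLM N hN (projCLM M hM x) := by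
    simp [comp_apply, sub_apply]
  rw [h1]
  calc ‖projCLM M hM x - projCLM N hN (projCLM M hM x)‖
      ≤ gapDelta (M : Set H) (N : Set H) * ‖projCLM M hM x‖ :=
        norm_sub_projCLM_le_gapDelta M N hN (projCLM_mem M hM x)
    _ ≤ gapDelta (M : Set H) (N : Set H) * ‖x‖ := by
        have := norm_projCLM_apply_le M hM x
        have h0 := gapDelta_nonneg (M : Set H) (N : Set H)
        nlinarith

lemma norm_projCLM_comp_orthProj_le (M N : Submodule ℂ H) (hM : IsClosed (M : Set H))
    (hN : IsClosed (N : Set H)) :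
    ‖projCLM M hM ∘L (1 - projCLM N hN)‖ ≤ gapDelta (M : Set H) (N : Set H) := by
  have hstar : projCLM M hM ∘L (1 - projCLM N hN)
      = star ((1 - projCLM N hN) ∘L projCLM M hM) := by
    have h1 : ((1 - projCLM N hN) ∘L projCLM M hM)
        = (1 - projCLM N hN) * projCLM M hM := rfl
    rw [h1, star_mul, (projCLM_selfAdjoint M hM).star_eq,
      ((IsSelfAdjoint.one (R := H →L[ℂ] H)).sub (projCLM_selfAdjoint N hN)).star_eq]
    rfl
  rw [hstar, norm_star]
  exact norm_orthProj_comp_projCLM_le M N hM hN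

lemma norm_projCLM_sub_projCLM_le (M N : Submodule ℂ H) (hM : IsClosed (M : Set H))
    (hN : IsClosed (N : Set H)) :
    ‖projCLM M hM - projCLM N hN‖ ≤ gapHat (M : Set H) (N : Set H) := by
  set δ := gapHat (M : Set H) (N : Set H) with hδ
  have hδ0 : 0 ≤ δ := gapHat_nonneg _ _
  apply opNorm_le_bound _ hδ0
  intro x
  set y := x - projCLM N hN x with hy
  set a := projCLM M hM y with ha
  set b := projCLM N hN x - projCLM M hM (projCLM N hN x) with hb
  have hab : (projCLM M hM - projCLM N hN) x = a - b := by
    simp only [sub_apply, ha, hb, hy, map_sub]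
    abel
  -- a ⟂ b
  have hbmem : b ∈ Mᗮ := sub_projCLM_mem_orthogonal M hM _
  have hinner : (inner ℂ a (-b) : ℂ) = 0 :=
    (Submodule.mem_orthogonal M (-b)).1 (Submodule.neg_mem _ hbmem) a (projCLM_mem M hM y)
  have hp1 : ‖a - b‖ * ‖a - b‖ = ‖a‖ * ‖a‖ + ‖b‖ * ‖b‖ := by
    have := norm_add_sq_eq_norm_sq_add_norm_sq_of_inner_eq_zero a (-b) hinner
    rwa [← sub_eq_add_neg, norm_neg] at this
  have hinner2 : (inner ℂ (projCLM N hN x) y : ℂ) = 0 :=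
    (Submodule.mem_orthogonal N y).1 (sub_projCLM_mem_orthogonal N hN x) _ (projCLM_mem N hN x)
  have hp2 : ‖x‖ * ‖x‖ = ‖projCLM N hN x‖ * ‖projCLM N hN x‖ + ‖y‖ * ‖y‖ := by
    have := norm_add_sq_eq_norm_sq_add_norm_sq_of_inner_eq_zero _ _ hinner2
    have hxy : projCLM N hN x + y = x := by rw [hy]; abel
    rwa [hxy] at this
  have hNy : projCLM N hN y = 0 := by
    rw [hy, map_sub, projCLM_of_mem N hN (projCLM_mem N hN x), sub_self]
  have hna : ‖a‖ ≤ δ * ‖y‖ := by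
    have h1 : a = (projCLM M hM ∘L (1 - projCLM N hN)) y := by
      simp [comp_apply, sub_apply, hNy, ha]
    rw [h1]
    calc ‖(projCLM M hM ∘L (1 - projCLM N hN)) y‖
        ≤ ‖projCLM M hM ∘L (1 - projCLM N hN)‖ * ‖y‖ := le_opNorm _ _
      _ ≤ δ * ‖y‖ := by
          apply mul_le_mul_of_nonneg_right _ (norm_nonneg y)
          exact le_trans (norm_projCLM_comp_orthProj_le M N hM hN) (le_max_left _ _)
  have hnb : ‖b‖ ≤ δ * ‖projCLM N hN x‖ := by
    have h1 : b = ((1 - projCLM M hM) ∘L projCLM N hN) (projCLM N hN x) := by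
      simp [comp_apply, sub_apply, hb, projCLM_of_mem N hN (projCLM_mem N hN x)]
    rw [h1]
    calc ‖((1 - projCLM M hM) ∘L projCLM N hN) (projCLM N hN x)‖
        ≤ ‖(1 - projCLM M hM) ∘L projCLM N hN‖ * ‖projCLM N hN x‖ := le_opNorm _ _
      _ ≤ δ * ‖projCLM N hN x‖ := by
          apply mul_le_mul_of_nonneg_right _ (norm_nonneg _)
          exact le_trans (norm_orthProj_comp_projCLM_le N M hN hM) (le_max_right _ _)
  rw [hab]
  have haux1 : ‖a‖ * ‖a‖ ≤ (δ * ‖y‖) * (δ * ‖y‖) :=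
    mul_le_mul hna hna (norm_nonneg a) (mul_nonneg hδ0 (norm_nonneg y))
  have haux2 : ‖b‖ * ‖b‖ ≤ (δ * ‖projCLM N hN x‖) * (δ * ‖projCLM N hN x‖) :=
    mul_le_mul hnb hnb (norm_nonneg b) (mul_nonneg hδ0 (norm_nonneg _))
  have hsq : ‖a - b‖ * ‖a - b‖ ≤ (δ * ‖x‖) * (δ * ‖x‖) := by nlinarith [mul_nonneg hδ0 hδ0, hp2, haux1, haux2, hp1]
  exact nonneg_le_nonneg_of_sq_le_sq (mul_nonneg hδ0 (norm_nonneg x)) hsq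


end GapLemmas

variable {X Y : Type*} [NormedAddCommGroup X] [InnerProductSpace ℂ X] [CompleteSpace X]
  [NormedAddCommGroup Y] [InnerProductSpace ℂ Y] [CompleteSpace Y]
set_option maxHeartbeats 1600000 in
theorem stmt_9 (A : X →L[ℂ] Y) (T T' : Submodule ℂ X) (S : Submodule ℂ Y)
    (hT : IsClosed (T : Set X)) (hT' : IsClosed (T' : Set X)) (hS : IsClosed (S : Set Y))
    (G : Y →L[ℂ] X) (hG : IsOuterInv A T S G)
    (hgap : gapHat (T : Set X) (T' : Set X) < 1 / (1 + ‖A‖ * ‖G‖) ^ 2) :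
    ∃ G' : Y →L[ℂ] X, IsOuterInv A T' S G' ∧
      G' = projCLM T' hT' ∘L
        (Ring.inverse (1 + G ∘L (projCLM Sᗮ (Submodule.isClosed_orthogonal S) ∘L
            (A ∘L (projCLM T' hT' - projCLM T hT)))) ∘L
          (G ∘L projCLM Sᗮ (Submodule.isClosed_orthogonal S))) ∧
      ‖G'‖ ≤ ‖G‖ / (1 - ‖G‖ * ‖A‖ * gapHat (T : Set X) (T' : Set X)) := by
  obtain ⟨hGAG, hrange, hker⟩ := hG
  set P := projCLM T hT with hP
  set Q := projCLM T' hT' with hQ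
  set Rp := projCLM Sᗮ (Submodule.isClosed_orthogonal S) with hRp
  set δ := gapHat (T : Set X) (T' : Set X) with hδdef
  have hδ0 : 0 ≤ δ := gapHat_nonneg _ _
  set aa := ‖A‖ * ‖G‖ with haa
  have haa0 : 0 ≤ aa := mul_nonneg (norm_nonneg _) (norm_nonneg _)
  have hpos : (0:ℝ) < (1 + aa)^2 := by positivity
  have hδsq : δ * (1 + aa)^2 < 1 := by
    have := (lt_div_iff₀ hpos).1 hgap
    linarith
  have hδlt1 : δ < 1 := by nlinarith [mul_nonneg haa0 hδ0, mul_nonneg (mul_nonneg haa0 haa0) hδ0]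
  have hsmall : ‖G‖ * ‖A‖ * δ < 1 := by
    have h1 : ‖G‖ * ‖A‖ = aa := by rw [haa, mul_comm]
    rw [h1]
    nlinarith [mul_nonneg haa0 hδ0, mul_nonneg (mul_nonneg haa0 haa0) hδ0]
  have hPQnorm : ‖Q - P‖ ≤ δ := by
    have h1 := norm_projCLM_sub_projCLM_le T T' hT hT'
    rw [norm_sub_rev] at h1
    exact h1
  -- basic pointwise facts
  have hmemT : ∀ x, G x ∈ T := fun x => hrange ▸ LinearMap.mem_range_self (G : Y →ₗ[ℂ] X) x
  have hPG : ∀ y, P (G y) = G y := fun y => projCLM_of_mem T hT (hmemT y)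
  have hGRp : ∀ y, G (Rp y) = G y := by
    intro y
    haveI := hS.completeSpace_coe
    have hmem : y - Rp y ∈ Sᗮᗮ := sub_projCLM_mem_orthogonal Sᗮ _ y
    rw [Submodule.orthogonal_orthogonal] at hmem
    rw [← hker] at hmem
    have h0 : G (y - Rp y) = 0 := hmem
    rw [map_sub, sub_eq_zero] at h0
    exact h0.symm
  have hGAGpt : ∀ y, G (A (G y)) = G y := by
    intro y
    have := congrArg (fun f : Y →L[ℂ] X => f y) hGAG
    simpa [comp_apply] using this
  have hGAP : ∀ x, G (A (P x)) = P x := by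
    intro x
    obtain ⟨y, hy⟩ : ∃ y, G y = P x := by
      have h2 : P x ∈ LinearMap.range (G : Y →ₗ[ℂ] X) := by rw [hrange]; exact projCLM_mem T hT x
      exact h2
    rw [← hy]
    exact hGAGpt y
  set t := G ∘L (Rp ∘L (A ∘L (Q - P))) with ht
  have htpt : ∀ x, t x = G (A (Q x - P x)) := by
    intro x; simp only [ht, comp_apply, sub_apply]; rw [hGRp]
  have htnorm : ‖t‖ ≤ ‖G‖ * ‖A‖ * δ := by
    apply opNorm_le_bound _ (by positivity)
    intro x
    rw [htpt]
    have h1 : ‖Q x - P x‖ ≤ δ * ‖x‖ := by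
      have h2 := le_opNorm (Q - P) x
      rw [sub_apply] at h2
      exact h2.trans (mul_le_mul_of_nonneg_right hPQnorm (norm_nonneg x))
    calc ‖G (A (Q x - P x))‖ ≤ ‖G‖ * ‖A (Q x - P x)‖ := le_opNorm _ _
      _ ≤ ‖G‖ * (‖A‖ * ‖Q x - P x‖) :=
          mul_le_mul_of_nonneg_left (le_opNorm A _) (norm_nonneg G)
      _ ≤ ‖G‖ * (‖A‖ * (δ * ‖x‖)) := by
          apply mul_le_mul_of_nonneg_left _ (norm_nonneg G)
          exact mul_le_mul_of_nonneg_left h1 (norm_nonneg A)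
      _ = ‖G‖ * ‖A‖ * δ * ‖x‖ := by ring
  have htlt : ‖t‖ < 1 := lt_of_le_of_lt htnorm hsmall
  have hneg : ‖-t‖ < 1 := by rwa [norm_neg]
  set u : (X →L[ℂ] X)ˣ := Units.oneSub (-t) hneg with hu
  have huval : (u : X →L[ℂ] X) = 1 + t := by rw [hu, Units.val_oneSub, sub_neg_eq_add]
  set B := ((u⁻¹ : (X →L[ℂ] X)ˣ) : X →L[ℂ] X) with hB
  have hRinginv : Ring.inverse (1 + t) = B := by
    rw [← huval, Ring.inverse_unit]
  have hFB : ∀ x, (1 + t) (B x) = x := by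
    intro x
    have h1 : (u : X →L[ℂ] X) * B = 1 := u.mul_inv
    have := congrArg (fun f : X →L[ℂ] X => f x) h1
    simpa [huval] using this
  have hBF : ∀ x, B ((1 + t) x) = x := by
    intro x
    have h1 : B * (u : X →L[ℂ] X) = 1 := u.inv_mul
    have := congrArg (fun f : X →L[ℂ] X => f x) h1
    simpa [huval] using this
  have hPF : ∀ z, P ((1 + t) z) = G (A (Q z)) := by
    intro z
    have h1 : P (t z) = t z := by rw [htpt]; exact hPG _
    have h2 : (1 + t) z = z + t z := by simp [add_apply]
    rw [h2, map_add, h1, htpt, map_sub, map_sub, hGAP]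
    abel
  have hkey : ∀ x, G (A (Q (B x))) = P x := by
    intro x
    rw [← hPF (B x), hFB]
  set G' := Q ∘L (B ∘L (G ∘L Rp)) with hG'
  have hG'pt : ∀ y, G' y = Q (B (G y)) := by
    intro y; simp only [hG', comp_apply]; rw [hGRp]
  have hGAG' : ∀ y, G (A (G' y)) = G y := by
    intro y
    rw [hG'pt, hkey, hPG]
  refine ⟨G', ⟨?_, ?_, ?_⟩, ?_, ?_⟩
  · -- G' A G' = G'
    ext y
    simp only [comp_apply]
    rw [hG'pt (A (G' y)), hGAG', ← hG'pt]
  · -- range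
    apply le_antisymm
    · rintro x ⟨y, rfl⟩
      rw [ContinuousLinearMap.coe_coe, hG'pt]
      exact projCLM_mem T' hT' _
    · intro x hx
      haveI := hT'.completeSpace_coe
      set W : T' →L[ℂ] T' :=
        ContinuousLinearMap.codRestrict ((Q ∘L P) ∘L T'.subtypeL) T'
          (fun w => projCLM_mem T' hT' _) with hW
      have hWnorm : ‖1 - W‖ < 1 := by
        apply lt_of_le_of_lt (opNorm_le_bound _ hδ0 ?_) hδlt1
        intro w
        have hcoe : (((1 - W) w : T') : X) = (w : X) - Q (P (w : X)) := by
          simp [hW, sub_apply, coe_codRestrict_apply, comp_apply]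
          rfl
        have h1 : ‖(1 - W) w‖ = ‖(w : X) - Q (P (w : X))‖ := by
          rw [← hcoe]; rfl
        rw [h1]
        have hQw : Q (w : X) = (w : X) := projCLM_of_mem T' hT' w.2
        have h2 : (w : X) - Q (P (w : X)) = Q ((Q - P) (w : X)) := by
          rw [sub_apply, map_sub, hQw, projCLM_of_mem T' hT' w.2]
        rw [h2]
        calc ‖Q ((Q - P) (w : X))‖ ≤ ‖(Q - P) (w : X)‖ := norm_projCLM_apply_le T' hT' _
          _ ≤ ‖Q - P‖ * ‖(w : X)‖ := le_opNorm _ _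
          _ ≤ δ * ‖w‖ := by
              have : ‖(w : X)‖ = ‖w‖ := rfl
              rw [this]
              exact mul_le_mul_of_nonneg_right hPQnorm (norm_nonneg _)
      have hWunit : IsUnit W := by
        have := isUnit_one_sub_of_norm_lt_one (x := 1 - W) hWnorm
        simpa using this
      obtain ⟨Wu, hWu⟩ := hWunit
      set v : T' := ((Wu⁻¹ : (T' →L[ℂ] T')ˣ) : T' →L[ℂ] T') ⟨x, hx⟩ with hv
      have hWv : W v = ⟨x, hx⟩ := by
        have h1 : (Wu : T' →L[ℂ] T') * ((Wu⁻¹ : (T' →L[ℂ] T')ˣ) : T' →L[ℂ] T') = 1 := Wu.mul_inv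
        have := congrArg (fun f : T' →L[ℂ] T' => f ⟨x, hx⟩) h1
        simpa [hWu, hv] using this
      have hQPv : Q (P (v : X)) = x := congrArg Subtype.val hWv
      set m : X := P (v : X) with hm
      have hFm : (1 + t) m ∈ T := by
        have h1 : (1 + t) m = m + t m := by simp [add_apply]
        rw [h1]
        apply T.add_mem (projCLM_mem T hT _)
        rw [htpt]
        exact hmemT _
      obtain ⟨y, hy⟩ : ∃ y, G y = (1 + t) m := by
        have h2 : (1 + t) m ∈ LinearMap.range (G : Y →ₗ[ℂ] X) := by rw [hrange]; exact hFm
        exact h2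
      refine ⟨y, ?_⟩
      rw [ContinuousLinearMap.coe_coe, hG'pt, hy, hBF, hm, hQPv]
  · -- kernel
    ext y
    constructor
    · intro hy
      have h0 : G' y = 0 := hy
      have h1 : G y = 0 := by
        rw [← hGAG' y, h0, map_zero, map_zero]
      rw [← hker]
      exact h1
    · intro hy
      have h1 : G y = 0 := by rw [← hker] at hy; exact hy
      have : G' y = 0 := by rw [hG'pt, h1, map_zero, map_zero]
      exact this
  · -- formula
    rw [hRinginv]
  · -- norm bound
    have hBsum : B = ∑' n : ℕ, (-t)^n := rfl
    have hBnorm : ‖B‖ ≤ (1 - ‖t‖)⁻¹ := by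
      rw [hBsum]
      apply tsum_of_norm_bounded (hasSum_geometric_of_lt_one (norm_nonneg t) htlt)
      intro i
      cases i with
      | zero => rw [pow_zero, pow_zero, ContinuousLinearMap.one_def]; exact norm_id_le
      | succ n =>
          calc ‖(-t)^(n+1)‖ ≤ ‖-t‖^(n+1) := norm_pow_le' _ (Nat.succ_pos n)
            _ = ‖t‖^(n+1) := by rw [norm_neg]
    have h1c : 0 < 1 - ‖G‖ * ‖A‖ * δ := by linarith
    have h1t : 0 < 1 - ‖t‖ := by linarith
    have hBn2 : ‖B‖ ≤ (1 - ‖G‖ * ‖A‖ * δ)⁻¹ := by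
      apply le_trans hBnorm
      apply inv_anti₀ h1c
      linarith
    have hG'norm : ‖G'‖ ≤ ‖B‖ * ‖G‖ := by
      apply opNorm_le_bound _ (mul_nonneg (norm_nonneg B) (norm_nonneg G))
      intro y
      rw [hG'pt]
      calc ‖Q (B (G y))‖ ≤ ‖B (G y)‖ := norm_projCLM_apply_le T' hT' _
        _ ≤ ‖B‖ * ‖G y‖ := le_opNorm _ _
        _ ≤ ‖B‖ * (‖G‖ * ‖y‖) :=
            mul_le_mul_of_nonneg_left (le_opNorm G y) (norm_nonneg B)
        _ = ‖B‖ * ‖G‖ * ‖y‖ := by ring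
    rw [div_eq_mul_inv]
    calc ‖G'‖ ≤ ‖B‖ * ‖G‖ := hG'norm
      _ ≤ (1 - ‖G‖ * ‖A‖ * δ)⁻¹ * ‖G‖ := mul_le_mul_of_nonneg_right hBn2 (norm_nonneg G)
      _ = ‖G‖ * (1 - ‖G‖ * ‖A‖ * δ)⁻¹ := by ring
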